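/- The ℤ[v,v^{−1}]-submodule of ℚ(v)[x] spanned by {P′_n : n ≥ 0} is closed under multiplication: for all m, n ≥ 0 the product P′_m · P′_n is a ℤ[v,v^{−1}]-linear combination of finitely many P′_k. Consequently, this span equals the ℤ[v,v^{−1}]-subalgebra 𝓡 of ℚ(v)[x] generated by the elements P′_n, n ≥ 1, and 𝓡 is a free ℤ[v,v^{−1}]-module with basis {P′_n : n ≥ 0}. -/

import Mathlib

/-- The quantum integer `[n] = (v^n − v^{−n})/(v − v^{−1})` in `ℚ(v)`. -/
noncomputable def qInt (n : ℕ) : RatFunc ℚ :=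
  (RatFunc.X ^ n - (RatFunc.X)⁻¹ ^ n) / (RatFunc.X - (RatFunc.X)⁻¹)

/-- The quantum factorial `[n]! = [1][2]⋯[n]` in `ℚ(v)`. -/
noncomputable def qFact (n : ℕ) : RatFunc ℚ :=
  ∏ i ∈ Finset.Icc 1 n, qInt i

/-- `P_n = ∏_{i=0}^{n−1} (x − v^{2i+1} − v^{−2i−1})` in `ℚ(v)[x]`. -/
noncomputable def Pbasis (n : ℕ) : Polynomial (RatFunc ℚ) :=
  ∏ i ∈ Finset.range n,
    (Polynomial.X - Polynomial.C (RatFunc.X ^ (2 * i + 1) + (RatFunc.X)⁻¹ ^ (2 * i + 1)))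

/-- `P′_n = P_n / ((v − v^{−1})^n [n]!)` in `ℚ(v)[x]`. -/
noncomputable def Pbasis' (n : ℕ) : Polynomial (RatFunc ℚ) :=
  Polynomial.C (((RatFunc.X - (RatFunc.X)⁻¹) ^ n * qFact n)⁻¹) * Pbasis n

/-- The copy of `ℤ[v,v^{−1}]` inside `ℚ(v)`, namely the subring generated by `v`
and `v^{−1}`. -/
noncomputable def ZLaurent : Subring (RatFunc ℚ) :=
  Subring.closure {RatFunc.X, (RatFunc.X)⁻¹}

/-- `inSpanP' S f` says that `f ∈ ℚ(v)[x]` is a `ℤ[v,v^{−1}]`-linear combination of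
finitely many of the `P′_k` with `k ∈ S`. -/
noncomputable def inSpanP' (S : Set ℕ) (f : Polynomial (RatFunc ℚ)) : Prop :=
  ∃ (s : Finset ℕ) (c : ℕ → ZLaurent), ↑s ⊆ S ∧
    f = ∑ k ∈ s, Polynomial.C ((c k : RatFunc ℚ)) * Pbasis' k

/-- The `ℤ[v,v^{−1}]`-subalgebra `𝓡` of `ℚ(v)[x]` generated by the `P′_n`, `n ≥ 1`,
realized as the subring generated by the constants `ℤ[v,v^{−1}]` together with the
`P′_n`, `n ≥ 1`. -/
noncomputable def Ralg : Subring (Polynomial (RatFunc ℚ)) :=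
  Subring.closure
    ((Polynomial.C '' (ZLaurent : Set (RatFunc ℚ))) ∪ {f | ∃ n : ℕ, 1 ≤ n ∧ f = Pbasis' n})

namespace QAux

open Polynomial

noncomputable abbrev V : RatFunc ℚ := RatFunc.X

lemma hV : V ≠ 0 := RatFunc.X_ne_zero

/-- `w r = v^r - v^{-r}`. -/
noncomputable def wq (r : ℕ) : RatFunc ℚ := V ^ r - (V⁻¹) ^ r

/-- `a s = v^{2s+1} + v^{-(2s+1)}`. -/
noncomputable def aq (s : ℕ) : RatFunc ℚ := V ^ (2 * s + 1) + (V⁻¹) ^ (2 * s + 1)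

lemma V_pow_ne_one (n : ℕ) (hn : 1 ≤ n) : V ^ n ≠ 1 := by
  intro h
  have h2 : (Polynomial.X : Polynomial ℚ) ^ n = 1 := by
    apply IsFractionRing.injective (Polynomial ℚ) (RatFunc ℚ)
    simpa [map_pow, RatFunc.algebraMap_X] using h
  have := congrArg Polynomial.natDegree h2
  simp [Polynomial.natDegree_X_pow] at this
  omega

lemma wq_ne_zero {r : ℕ} (hr : 1 ≤ r) : wq r ≠ 0 := by
  intro h
  have h1 : V ^ r = (V⁻¹) ^ r := by unfold wq at h; linear_combination h
  have h2 : V ^ (2 * r) = 1 := by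
    have h3 : V ^ (2 * r) = (V⁻¹) ^ r * V ^ r := by rw [← h1]; ring
    rw [h3, ← mul_pow, inv_mul_cancel₀ hV, one_pow]
  exact V_pow_ne_one (2 * r) (by omega) h2

lemma wq_one : wq 1 = RatFunc.X - (RatFunc.X)⁻¹ := by simp [wq]

lemma wq_one_ne_zero : wq 1 ≠ 0 := wq_ne_zero le_rfl

lemma qInt_eq (n : ℕ) : qInt n = wq n / wq 1 := by
  rw [qInt, wq_one]; rfl

lemma wq_eq (n : ℕ) : wq n = wq 1 * qInt n := by
  rw [qInt_eq, mul_div_cancel₀ _ wq_one_ne_zero]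

lemma qInt_ne_zero {n : ℕ} (hn : 1 ≤ n) : qInt n ≠ 0 := by
  rw [qInt_eq]
  exact div_ne_zero (wq_ne_zero hn) wq_one_ne_zero

lemma qFact_ne_zero (n : ℕ) : qFact n ≠ 0 := by
  rw [qFact]
  apply Finset.prod_ne_zero_iff.2
  intro i hi
  exact qInt_ne_zero (Finset.mem_Icc.1 hi).1

lemma qFact_zero : qFact 0 = 1 := by simp [qFact]

lemma qFact_succ (n : ℕ) : qFact (n + 1) = qFact n * qInt (n + 1) := by
  rw [qFact, qFact, ← Finset.prod_Icc_succ_top (by omega)]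

/-- `w (a+b) = v^b w a + v^{-a} w b` (a ring identity). -/
lemma wq_add (a b : ℕ) : wq (a + b) = V ^ b * wq a + (V⁻¹) ^ a * wq b := by
  unfold wq
  have hX : V ≠ 0 := hV
  field_simp
  ring

lemma key_wq (j p s : ℕ) : wq j * wq (j + p + s) + wq p * wq s = wq (j + p) * wq (j + s) := by
  unfold wq
  have hX : V ≠ 0 := hV
  simp only [inv_pow]
  field_simp
  ring

lemma key_qInt (j p s : ℕ) :
    qInt j * qInt (j + p + s) + qInt p * qInt s = qInt (j + p) * qInt (j + s) := by
  have h := key_wq j p s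
  simp only [qInt_eq]
  have h1 : wq 1 ≠ 0 := wq_one_ne_zero
  field_simp
  linear_combination h

lemma aq_sub (M d : ℕ) : aq (M + d) - aq M = wq d * wq (2 * M + d + 1) := by
  unfold aq wq
  have hX : V ≠ 0 := hV
  simp only [inv_pow]
  field_simp
  ring

lemma X_mem : V ∈ ZLaurent := Subring.subset_closure (Set.mem_insert _ _)

lemma Xinv_mem : V⁻¹ ∈ ZLaurent :=
  Subring.subset_closure (Set.mem_insert_of_mem _ rfl)

lemma wq_mem (r : ℕ) : wq r ∈ ZLaurent :=
  sub_mem (pow_mem X_mem r) (pow_mem Xinv_mem r)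

lemma aq_mem (s : ℕ) : aq s ∈ ZLaurent :=
  add_mem (pow_mem X_mem _) (pow_mem Xinv_mem _)

lemma qInt_zero : qInt 0 = 0 := by simp [qInt]

lemma qInt_one : qInt 1 = 1 := by
  have := wq_one_ne_zero
  rw [qInt_eq]
  field_simp

lemma qInt_add (a b : ℕ) : qInt (a + b) = V ^ b * qInt a + (V⁻¹) ^ a * qInt b := by
  simp only [qInt_eq]
  rw [wq_add]
  ring

lemma qInt_mem (n : ℕ) : qInt n ∈ ZLaurent := by
  induction n with
  | zero => rw [qInt_zero]; exact zero_mem _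
  | succ k ih =>
    rw [show k + 1 = k + 1 from rfl, qInt_add k 1, qInt_one]
    exact add_mem (mul_mem (pow_mem X_mem 1) ih) (by simpa using pow_mem Xinv_mem k)

lemma qFact_mem (n : ℕ) : qFact n ∈ ZLaurent := by
  induction n with
  | zero => rw [qFact_zero]; exact one_mem _
  | succ k ih => rw [qFact_succ]; exact mul_mem ih (qInt_mem _)

/-- quantum binomial `[a+b]! / ([a]![b]!)`. -/
noncomputable def qCh (a b : ℕ) : RatFunc ℚ := qFact (a + b) / (qFact a * qFact b)

lemma qCh_zero_right (a : ℕ) : qCh a 0 = 1 := by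
  rw [qCh, qFact_zero, mul_one, Nat.add_zero, div_self (qFact_ne_zero a)]

lemma qCh_zero_left (b : ℕ) : qCh 0 b = 1 := by
  rw [qCh, qFact_zero, one_mul, Nat.zero_add, div_self (qFact_ne_zero b)]

lemma qCh_succ_succ (a b : ℕ) :
    qCh (a + 1) (b + 1) = V ^ (b + 1) * qCh a (b + 1) + (V⁻¹) ^ (a + 1) * qCh (a + 1) b := by
  have hadd := qInt_add (a + 1) (b + 1)
  simp only [qCh]
  rw [show a + 1 + (b + 1) = (a + 1 + b) + 1 by omega, qFact_succ,
    show a + (b + 1) = a + 1 + b by omega,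
    show a + 1 + b + 1 = a + 1 + (b + 1) by omega, hadd,
    qFact_succ a, qFact_succ b]
  have h1 := qFact_ne_zero a
  have h2 := qFact_ne_zero b
  have h3 := qInt_ne_zero (show 1 ≤ a + 1 by omega)
  have h4 := qInt_ne_zero (show 1 ≤ b + 1 by omega)
  have hx : V ≠ 0 := hV
  set F := qFact (a + 1 + b)
  set A := qFact a
  set B := qFact b
  set iA := qInt (a + 1)
  set iB := qInt (b + 1)
  generalize V ^ (b + 1) = c1
  generalize (V⁻¹) ^ (a + 1) = c2
  field_simp

lemma qCh_mem : ∀ a b : ℕ, qCh a b ∈ ZLaurent := by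
  intro a
  induction a with
  | zero => intro b; rw [qCh_zero_left]; exact one_mem _
  | succ a iha =>
    intro b
    induction b with
    | zero => rw [qCh_zero_right]; exact one_mem _
    | succ b ihb =>
      rw [qCh_succ_succ]
      exact add_mem (mul_mem (pow_mem X_mem _) (iha (b + 1)))
        (mul_mem (pow_mem Xinv_mem _) ihb)

/-- The structure constants. -/
noncomputable def cc (m n i : ℕ) : RatFunc ℚ :=
  if i ≤ m ∧ i ≤ n then
    wq 1 ^ i * qFact (m + n) / (qFact (m - i) * qFact (n - i) * qFact i)
  else 0

lemma cc_eq_prod (p r i : ℕ) :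
    cc (i + p) (i + r) i
      = wq 1 ^ i * (qCh p (r + 2 * i) * qCh r (2 * i) * qCh i i * qFact i) := by
  rw [cc, if_pos ⟨Nat.le_add_right _ _, Nat.le_add_right _ _⟩,
    show i + p - i = p by omega, show i + r - i = r by omega,
    show i + p + (i + r) = p + (r + 2 * i) by omega]
  simp only [qCh]
  rw [show r + 2 * i = r + 2 * i from rfl, show (2 : ℕ) * i = i + i by omega]
  have h1 := qFact_ne_zero p
  have h2 := qFact_ne_zero r
  have h3 := qFact_ne_zero i
  have h4 := qFact_ne_zero (r + (i + i))
  have h5 := qFact_ne_zero (i + i)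
  field_simp

lemma cc_mem (m n i : ℕ) : cc m n i ∈ ZLaurent := by
  by_cases h : i ≤ m ∧ i ≤ n
  · obtain ⟨p, rfl⟩ : ∃ p, m = i + p := ⟨m - i, by omega⟩
    obtain ⟨r, rfl⟩ : ∃ r, n = i + r := ⟨n - i, by omega⟩
    rw [cc_eq_prod]
    exact mul_mem (pow_mem (wq_mem 1) i)
      (mul_mem (mul_mem (mul_mem (qCh_mem _ _) (qCh_mem _ _)) (qCh_mem _ _)) (qFact_mem i))
  · rw [cc, if_neg h]; exact zero_mem _

lemma cc_diamond (m n j : ℕ) (hj : j ≤ n) :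
    wq (m + 1) * cc (m + 1) n j
      = cc m n j * wq (m + n + 1 - j)
        + (if 1 ≤ j then cc m n (j - 1) * (aq (m + n + 1 - j) - aq m) else 0) := by
  rcases Nat.eq_zero_or_pos j with rfl | hj1
  · rw [if_neg (by omega)]
    rw [cc, if_pos (show 0 ≤ m + 1 ∧ 0 ≤ n by omega),
      cc, if_pos (show 0 ≤ m ∧ 0 ≤ n by omega)]
    simp only [Nat.sub_zero, pow_zero, one_mul, qFact_zero, mul_one]
    rw [show m + 1 + n = (m + n) + 1 by omega, qFact_succ (m + n), qFact_succ m,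
      wq_eq (m + 1), wq_eq (m + n + 1), add_zero]
    have h1 := qFact_ne_zero m
    have h2 := qFact_ne_zero n
    have h3 := qFact_ne_zero (m + n)
    have h4 := qInt_ne_zero (show 1 ≤ m + 1 by omega)
    have h6 := qInt_ne_zero (show 1 ≤ m + n + 1 by omega)
    have h5 := wq_one_ne_zero
    set W := wq 1
    set Fm := qFact m
    set Fn := qFact n
    set Fmn := qFact (m + n)
    set iM := qInt (m + 1)
    set iMN := qInt (m + n + 1)
    clear_value W Fm Fn Fmn iM iMN
    field_simp
  · obtain ⟨t, rfl⟩ : ∃ t, j = t + 1 := ⟨j - 1, by omega⟩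
    rw [if_pos (by omega)]
    by_cases hm : t + 1 ≤ m
    · -- main case
      obtain ⟨p, rfl⟩ : ∃ p, m = t + 1 + p := ⟨m - (t + 1), by omega⟩
      obtain ⟨r, rfl⟩ : ∃ r, n = t + 1 + r := ⟨n - (t + 1), by omega⟩
      rw [cc, if_pos (show t + 1 ≤ t + 1 + p + 1 ∧ t + 1 ≤ t + 1 + r by omega),
        cc, if_pos (show t + 1 ≤ t + 1 + p ∧ t + 1 ≤ t + 1 + r by omega),
        cc, if_pos (show t + 1 - 1 ≤ t + 1 + p ∧ t + 1 - 1 ≤ t + 1 + r by omega)]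
      have haq : aq (t + 1 + p + (t + 1 + r) + 1 - (t + 1)) - aq (t + 1 + p)
          = wq (r + 1) * wq (2 * t + 2 * p + r + 4) := by
        have h := aq_sub (t + 1 + p) (r + 1)
        rw [show t + 1 + p + (r + 1) = t + 1 + p + (t + 1 + r) + 1 - (t + 1) by omega,
          show 2 * (t + 1 + p) + (r + 1) + 1 = 2 * t + 2 * p + r + 4 by omega] at h
        exact h
      rw [haq]
      rw [show t + 1 + p + (t + 1 + r) + 1 - (t + 1) = t + p + r + 2 by omega,
        show t + 1 + p + 1 - (t + 1) = p + 1 by omega,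
        show t + 1 + r - (t + 1) = r by omega,
        show t + 1 + p - (t + 1) = p by omega,
        show t + 1 - 1 = t by omega,
        show t + 1 + p - t = p + 1 by omega,
        show t + 1 + r - t = r + 1 by omega,
        show t + 1 + p + 1 + (t + 1 + r) = (2 * t + p + r + 2) + 1 by omega,
        show t + 1 + p + (t + 1 + r) = 2 * t + p + r + 2 by omega,
        show t + 1 + p + 1 = t + p + 2 by omega]
      rw [qFact_succ (2 * t + p + r + 2), qFact_succ p, qFact_succ r, qFact_succ t,
        wq_eq (t + p + 2), wq_eq (t + p + r + 2), wq_eq (r + 1), wq_eq (2 * t + 2 * p + r + 4),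
        pow_succ (wq 1) t]
      have key := key_qInt (t + 1) (p + 1) (t + p + r + 2)
      rw [show t + 1 + (p + 1) + (t + p + r + 2) = 2 * t + 2 * p + r + 4 by omega,
        show t + 1 + (p + 1) = t + p + 2 by omega,
        show t + 1 + (t + p + r + 2) = 2 * t + p + r + 3 by omega] at key
      have hW := wq_one_ne_zero
      have hF := qFact_ne_zero (2 * t + p + r + 2)
      have hA := qFact_ne_zero p
      have hB := qFact_ne_zero r
      have hD := qFact_ne_zero t
      have hip := qInt_ne_zero (show 1 ≤ p + 1 by omega)
      have hir := qInt_ne_zero (show 1 ≤ r + 1 by omega)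
      have hit := qInt_ne_zero (show 1 ≤ t + 1 by omega)
      set W := wq 1
      set F := qFact (2 * t + p + r + 2)
      set A := qFact p
      set B := qFact r
      set D := qFact t
      set ip := qInt (p + 1)
      set ir := qInt (r + 1)
      set it := qInt (t + 1)
      set I := qInt (2 * t + p + r + 3)
      set J := qInt (t + p + 2)
      set K := qInt (t + p + r + 2)
      set Lq := qInt (2 * t + 2 * p + r + 4)
      clear_value W F A B D ip ir it I J K Lq
      clear haq
      field_simp
      linear_combination (-1 : RatFunc ℚ) * key
    · by_cases hm1 : t + 1 ≤ m + 1
      · -- j = m + 1 case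
        obtain rfl : t = m := by omega
        obtain ⟨r, rfl⟩ : ∃ r, n = t + 1 + r := ⟨n - (t + 1), by omega⟩
        rw [cc, if_pos (show t + 1 ≤ t + 1 ∧ t + 1 ≤ t + 1 + r by omega),
          cc, if_neg (show ¬(t + 1 ≤ t ∧ t + 1 ≤ t + 1 + r) by omega),
          cc, if_pos (show t + 1 - 1 ≤ t ∧ t + 1 - 1 ≤ t + 1 + r by omega)]
        have haq : aq (t + (t + 1 + r) + 1 - (t + 1)) - aq t
            = wq (r + 1) * wq (2 * t + r + 2) := by
          have h := aq_sub t (r + 1)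
          rw [show t + (r + 1) = t + (t + 1 + r) + 1 - (t + 1) by omega,
            show 2 * t + (r + 1) + 1 = 2 * t + r + 2 by omega] at h
          exact h
        rw [haq, zero_mul, zero_add]
        rw [show t + 1 - (t + 1) = 0 by omega,
          show t + 1 + r - (t + 1) = r by omega,
          show t + 1 - 1 = t by omega,
          show t - t = 0 by omega,
          show t + 1 + r - t = r + 1 by omega,
          show t + 1 + (t + 1 + r) = (2 * t + r + 1) + 1 by omega,
          show t + (t + 1 + r) = 2 * t + r + 1 by omega,
          qFact_zero]
        rw [qFact_succ (2 * t + r + 1), qFact_succ t, qFact_succ r,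
          wq_eq (t + 1), wq_eq (r + 1), wq_eq (2 * t + r + 2), pow_succ (wq 1) t]
        have hW := wq_one_ne_zero
        have hF := qFact_ne_zero (2 * t + r + 1)
        have hA := qFact_ne_zero t
        have hB := qFact_ne_zero r
        have him := qInt_ne_zero (show 1 ≤ t + 1 by omega)
        have hir := qInt_ne_zero (show 1 ≤ r + 1 by omega)
        have hi2 := qInt_ne_zero (show 1 ≤ 2 * t + r + 2 by omega)
        set W := wq 1
        set F := qFact (2 * t + r + 1)
        set A := qFact t
        set B := qFact r
        set im := qInt (t + 1)
        set ir := qInt (r + 1)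
        set i2 := qInt (2 * t + r + 2)
        clear_value W F A B im ir i2
        clear haq
        field_simp
      · -- j > m + 1 : everything vanishes
        rw [cc, if_neg (by omega), cc, if_neg (by omega), cc, if_neg (by omega)]
        simp

lemma Pbasis_succ (n : ℕ) :
    Pbasis (n + 1) = Pbasis n * (Polynomial.X - Polynomial.C (aq n)) := by
  rw [Pbasis, Pbasis, Finset.prod_range_succ]
  rfl

lemma Pbasis'_eq (n : ℕ) :
    Pbasis' n = Polynomial.C ((wq 1 ^ n * qFact n)⁻¹) * Pbasis n := by
  rw [Pbasis', wq_one]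

lemma Pbasis'_zero : Pbasis' 0 = 1 := by
  rw [Pbasis'_eq, Pbasis, Finset.prod_range_zero, qFact_zero]
  simp

lemma step2 (m : ℕ) :
    (Polynomial.X - Polynomial.C (aq m)) * Pbasis' m
      = Polynomial.C (wq (m + 1)) * Pbasis' (m + 1) := by
  rw [Pbasis'_eq, Pbasis'_eq, Pbasis_succ]
  have hs : ((wq 1 ^ m * qFact m)⁻¹ : RatFunc ℚ)
      = wq (m + 1) * (wq 1 ^ (m + 1) * qFact (m + 1))⁻¹ := by
    rw [qFact_succ, wq_eq (m + 1), pow_succ]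
    have h1 := wq_one_ne_zero
    have h2 := qFact_ne_zero m
    have h3 := qInt_ne_zero (show 1 ≤ m + 1 by omega)
    have h4 : (wq 1: RatFunc ℚ) ^ m ≠ 0 := pow_ne_zero _ h1
    field_simp
  rw [hs, Polynomial.C_mul]
  ring

lemma main_formula (m n : ℕ) :
    Pbasis' m * Pbasis' n
      = ∑ i ∈ Finset.range (n + 1), Polynomial.C (cc m n i) * Pbasis' (m + n - i) := by
  induction m with
  | zero =>
    have hcc0 : cc 0 n 0 = 1 := by
      rw [cc, if_pos ⟨le_rfl, Nat.zero_le n⟩]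
      simp [qFact_zero, div_self (qFact_ne_zero n)]
    have hcc1 : ∀ i : ℕ, cc 0 n (i + 1) = 0 := fun i => by rw [cc, if_neg (by omega)]
    rw [Pbasis'_zero, one_mul, Finset.sum_range_succ']
    simp [hcc0, hcc1]
  | succ m IH =>
    have hC : (Polynomial.C (wq (m + 1)) : Polynomial (RatFunc ℚ)) ≠ 0 :=
      Polynomial.C_ne_zero.mpr (wq_ne_zero (by omega))
    apply mul_left_cancel₀ hC
    have G : ℕ → Polynomial (RatFunc ℚ) := fun j => 0
    calc Polynomial.C (wq (m + 1)) * (Pbasis' (m + 1) * Pbasis' n)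
        = ((Polynomial.X - Polynomial.C (aq m)) * Pbasis' m) * Pbasis' n := by
          rw [step2]; ring
      _ = (Polynomial.X - Polynomial.C (aq m)) * (Pbasis' m * Pbasis' n) := by ring
      _ = (Polynomial.X - Polynomial.C (aq m)) *
            ∑ i ∈ Finset.range (n + 1), Polynomial.C (cc m n i) * Pbasis' (m + n - i) := by
          rw [IH]
      _ = (∑ i ∈ Finset.range (n + 1),
            Polynomial.C (cc m n i * wq (m + n + 1 - i)) * Pbasis' (m + n + 1 - i))
          + ∑ i ∈ Finset.range (n + 1),
            Polynomial.C (cc m n i * (aq (m + n - i) - aq m)) * Pbasis' (m + n - i) := by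
          rw [Finset.mul_sum, ← Finset.sum_add_distrib]
          apply Finset.sum_congr rfl
          intro i hi
          have hi' : i ≤ n := by simpa [Nat.lt_succ_iff] using hi
          have h1 : m + n + 1 - i = (m + n - i) + 1 := by omega
          rw [h1, Polynomial.C_mul, Polynomial.C_mul, Polynomial.C_sub,
            mul_assoc (Polynomial.C (cc m n i)), ← step2 (m + n - i)]
          ring
      _ = (∑ i ∈ Finset.range (n + 1),
            Polynomial.C (cc m n i * wq (m + n + 1 - i)) * Pbasis' (m + n + 1 - i))
          + ∑ j ∈ Finset.range (n + 1),
            Polynomial.C (if 1 ≤ j then cc m n (j - 1) * (aq (m + n + 1 - j) - aq m) else 0)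
              * Pbasis' (m + n + 1 - j) := by
          congr 1
          set G : ℕ → Polynomial (RatFunc ℚ) := fun j =>
            Polynomial.C (if 1 ≤ j then cc m n (j - 1) * (aq (m + n + 1 - j) - aq m) else 0)
              * Pbasis' (m + n + 1 - j) with hGdef
          have hstep : ∀ i : ℕ,
              G (i + 1)
              = Polynomial.C (cc m n i * (aq (m + n - i) - aq m)) * Pbasis' (m + n - i) := by
            intro i
            rw [hGdef]
            simp only []
            rw [if_pos (by omega), show i + 1 - 1 = i by omega,
              show m + n + 1 - (i + 1) = m + n - i by omega]
          have hG0 : G 0 = 0 := by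
            rw [hGdef]
            simp
          have hGn : G (n + 1) = 0 := by
            rw [hGdef]
            simp only [show m + n + 1 - (n + 1) = m by omega, sub_self, mul_zero, if_pos (by omega : 1 ≤ n + 1),
              map_zero, zero_mul]
          calc ∑ i ∈ Finset.range (n + 1),
                Polynomial.C (cc m n i * (aq (m + n - i) - aq m)) * Pbasis' (m + n - i)
              = ∑ i ∈ Finset.range (n + 1), G (i + 1) :=
                Finset.sum_congr rfl (fun i _ => (hstep i).symm)
            _ = ∑ j ∈ Finset.range (n + 2), G j := by
                rw [Finset.sum_range_succ' G (n + 1), hG0, add_zero]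
            _ = ∑ j ∈ Finset.range (n + 1), G j := by
                rw [Finset.sum_range_succ, hGn, add_zero]
      _ = ∑ j ∈ Finset.range (n + 1),
            Polynomial.C (wq (m + 1) * cc (m + 1) n j) * Pbasis' (m + n + 1 - j) := by
          rw [← Finset.sum_add_distrib]
          apply Finset.sum_congr rfl
          intro j hj
          have hj' : j ≤ n := by simpa [Nat.lt_succ_iff] using hj
          rw [← add_mul, ← Polynomial.C_add, ← cc_diamond m n j hj']
      _ = Polynomial.C (wq (m + 1)) *
            ∑ j ∈ Finset.range (n + 1), Polynomial.C (cc (m + 1) n j) * Pbasis' (m + 1 + n - j) := by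
          rw [Finset.mul_sum]
          apply Finset.sum_congr rfl
          intro j hj
          rw [show m + 1 + n - j = m + n + 1 - j by omega, Polynomial.C_mul]
          ring


lemma part1 (m n : ℕ) : inSpanP' Set.univ (Pbasis' m * Pbasis' n) := by
  classical
  refine ⟨(Finset.range (n + 1)).image (fun i => m + n - i),
    fun k => ⟨cc m n (m + n - k), cc_mem m n _⟩, by simp, ?_⟩
  rw [main_formula, Finset.sum_image ?_]
  · apply Finset.sum_congr rfl
    intro i hi
    have hi' : i ≤ n := Finset.mem_range_succ_iff.mp hi
    simp only [show m + n - (m + n - i) = i from by omega]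
  · intro a ha b hb h
    have ha' : a ≤ n := Finset.mem_range_succ_iff.mp ha
    have hb' : b ≤ n := Finset.mem_range_succ_iff.mp hb
    have h' : m + n - a = m + n - b := h
    omega

lemma sp_zero : inSpanP' Set.univ (0 : Polynomial (RatFunc ℚ)) :=
  ⟨∅, fun _ => 0, by simp, by simp⟩

lemma sp_add {f g : Polynomial (RatFunc ℚ)}
    (hf : inSpanP' Set.univ f) (hg : inSpanP' Set.univ g) : inSpanP' Set.univ (f + g) := by
  classical
  obtain ⟨s, c, -, rfl⟩ := hf
  obtain ⟨t, d, -, rfl⟩ := hg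
  refine ⟨s ∪ t, fun k => (if k ∈ s then c k else 0) + (if k ∈ t then d k else 0), by simp, ?_⟩
  have h1 : ∑ k ∈ s, Polynomial.C ((c k : RatFunc ℚ)) * Pbasis' k
      = ∑ k ∈ s ∪ t, Polynomial.C (((if k ∈ s then c k else 0 : ZLaurent) : RatFunc ℚ)) * Pbasis' k := by
    rw [← Finset.sum_subset Finset.subset_union_left (fun x _ hx => by simp [hx])]
    exact Finset.sum_congr rfl fun x hx => by rw [if_pos hx]
  have h2 : ∑ k ∈ t, Polynomial.C ((d k : RatFunc ℚ)) * Pbasis' k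
      = ∑ k ∈ s ∪ t, Polynomial.C (((if k ∈ t then d k else 0 : ZLaurent) : RatFunc ℚ)) * Pbasis' k := by
    rw [← Finset.sum_subset Finset.subset_union_right (fun x _ hx => by simp [hx])]
    exact Finset.sum_congr rfl fun x hx => by rw [if_pos hx]
  rw [h1, h2, ← Finset.sum_add_distrib]
  apply Finset.sum_congr rfl
  intro x hx
  push_cast
  rw [Polynomial.C_add]
  ring

lemma sp_smul (z : ZLaurent) {f : Polynomial (RatFunc ℚ)}
    (hf : inSpanP' Set.univ f) : inSpanP' Set.univ (Polynomial.C (z : RatFunc ℚ) * f) := by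
  obtain ⟨s, c, -, rfl⟩ := hf
  refine ⟨s, fun k => z * c k, by simp, ?_⟩
  rw [Finset.mul_sum]
  apply Finset.sum_congr rfl
  intro x hx
  push_cast
  rw [Polynomial.C_mul]
  ring

lemma sp_sum {ι : Type} (t : Finset ι) (F : ι → Polynomial (RatFunc ℚ))
    (h : ∀ i ∈ t, inSpanP' Set.univ (F i)) : inSpanP' Set.univ (∑ i ∈ t, F i) := by
  classical
  induction t using Finset.induction with
  | empty => simpa using sp_zero
  | insert a t hnotmem ih =>
    rw [Finset.sum_insert hnotmem]
    exact sp_add (h _ (Finset.mem_insert_self _ _))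
      (ih fun i hi => h i (Finset.mem_insert_of_mem hi))

lemma sp_neg {f : Polynomial (RatFunc ℚ)}
    (hf : inSpanP' Set.univ f) : inSpanP' Set.univ (-f) := by
  obtain ⟨s, c, -, rfl⟩ := hf
  refine ⟨s, fun k => -(c k), by simp, ?_⟩
  rw [← Finset.sum_neg_distrib]
  apply Finset.sum_congr rfl
  intro x hx
  push_cast
  rw [Polynomial.C_neg]
  ring

lemma sp_one : inSpanP' Set.univ (1 : Polynomial (RatFunc ℚ)) :=
  ⟨{0}, fun _ => 1, by simp, by simp [Pbasis'_zero]⟩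

lemma sp_mul {f g : Polynomial (RatFunc ℚ)}
    (hf : inSpanP' Set.univ f) (hg : inSpanP' Set.univ g) : inSpanP' Set.univ (f * g) := by
  classical
  obtain ⟨s, c, -, rfl⟩ := hf
  obtain ⟨t, d, -, rfl⟩ := hg
  rw [Finset.sum_mul_sum]
  apply sp_sum
  intro k hk
  apply sp_sum
  intro l hl
  have h1 : (Polynomial.C ((c k : RatFunc ℚ)) * Pbasis' k) * (Polynomial.C ((d l : RatFunc ℚ)) * Pbasis' l)
      = Polynomial.C ((c k : RatFunc ℚ)) * (Polynomial.C ((d l : RatFunc ℚ)) * (Pbasis' k * Pbasis' l)) := by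
    ring
  rw [h1]
  exact sp_smul _ (sp_smul _ (part1 k l))

/-- The span as a subring. -/
noncomputable def Sspan : Subring (Polynomial (RatFunc ℚ)) where
  carrier := {f | inSpanP' Set.univ f}
  zero_mem' := sp_zero
  one_mem' := sp_one
  add_mem' := fun hf hg => sp_add hf hg
  neg_mem' := fun hf => sp_neg hf
  mul_mem' := fun hf hg => sp_mul hf hg

-- degree facts
lemma Pbasis_monic (n : ℕ) : (Pbasis n).Monic := by
  apply Polynomial.monic_prod_of_monic
  intro i _
  exact Polynomial.monic_X_sub_C _

lemma Pbasis_natDegree (n : ℕ) : (Pbasis n).natDegree = n := by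
  rw [Pbasis, Polynomial.natDegree_prod_of_monic _ _ (fun i _ => Polynomial.monic_X_sub_C _),
    Finset.sum_congr rfl (fun i _ => Polynomial.natDegree_X_sub_C _)]
  simp

lemma dd_ne_zero (n : ℕ) : ((wq 1 ^ n * qFact n)⁻¹ : RatFunc ℚ) ≠ 0 :=
  inv_ne_zero (mul_ne_zero (pow_ne_zero _ wq_one_ne_zero) (qFact_ne_zero n))

lemma Pbasis'_coeff_self (n : ℕ) : (Pbasis' n).coeff n = (wq 1 ^ n * qFact n)⁻¹ := by
  rw [Pbasis'_eq, Polynomial.coeff_C_mul]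
  have h : (Pbasis n).coeff n = 1 := by
    have := (Pbasis_monic n).coeff_natDegree
    rwa [Pbasis_natDegree] at this
  rw [h, mul_one]

lemma Pbasis'_coeff_of_lt {k M : ℕ} (h : k < M) : (Pbasis' k).coeff M = 0 := by
  rw [Pbasis'_eq, Polynomial.coeff_C_mul]
  rw [Polynomial.coeff_eq_zero_of_natDegree_lt (by rw [Pbasis_natDegree]; exact h), mul_zero]

lemma indep : ∀ (s : Finset ℕ) (d : ℕ → RatFunc ℚ),
    (∑ k ∈ s, Polynomial.C (d k) * Pbasis' k) = 0 → ∀ k ∈ s, d k = 0 := by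
  classical
  intro s
  induction s using Finset.strongInduction with
  | _ s ih =>
    intro d hsum k hk
    have hne : s.Nonempty := ⟨k, hk⟩
    set M := s.max' hne with hM
    have hdM : d M = 0 := by
      have h0 := congrArg (fun q : Polynomial (RatFunc ℚ) => q.coeff M) hsum
      simp only [Polynomial.finset_sum_coeff, Polynomial.coeff_C_mul, Polynomial.coeff_zero] at h0
      rw [Finset.sum_eq_single M (fun j hj hjne => by
        rw [Pbasis'_coeff_of_lt (lt_of_le_of_ne (Finset.le_max' s j hj) hjne), mul_zero])
        (fun habs => absurd (s.max'_mem hne) habs)] at h0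
      rw [Pbasis'_coeff_self] at h0
      rcases mul_eq_zero.mp h0 with h | h
      · exact h
      · exact absurd h (dd_ne_zero M)
    rcases eq_or_ne k M with rfl | hne2
    · exact hdM
    · have hsum' : ∑ j ∈ s.erase M, Polynomial.C (d j) * Pbasis' j = 0 := by
        have h := Finset.sum_erase_add s (fun j => Polynomial.C (d j) * Pbasis' j) (s.max'_mem hne)
        rw [← hM] at h
        rw [hsum, hdM] at h
        simpa using h
      exact ih (s.erase M) (Finset.erase_ssubset (s.max'_mem hne)) d hsum' k
        (Finset.mem_erase.mpr ⟨hne2, hk⟩)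

end QAux

theorem span_Pprime_is_subalgebra_and_free :
    (∀ m n : ℕ, inSpanP' Set.univ (Pbasis' m * Pbasis' n)) ∧
    {f | inSpanP' Set.univ f} = (Ralg : Set (Polynomial (RatFunc ℚ))) ∧
    (∀ (s : Finset ℕ) (c : ℕ → ZLaurent),
      ∑ k ∈ s, Polynomial.C ((c k : RatFunc ℚ)) * Pbasis' k = 0 → ∀ k ∈ s, c k = 0) := by
  refine ⟨QAux.part1, ?_, ?_⟩
  · apply Set.Subset.antisymm
    · rintro f ⟨s, c, -, rfl⟩
      apply sum_mem
      intro k hk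
      apply mul_mem
      · exact Subring.subset_closure (Or.inl ⟨(c k : RatFunc ℚ), (c k).2, rfl⟩)
      · rcases Nat.eq_zero_or_pos k with rfl | hkpos
        · rw [QAux.Pbasis'_zero]; exact one_mem _
        · exact Subring.subset_closure (Or.inr ⟨k, hkpos, rfl⟩)
    · have hle : Ralg ≤ QAux.Sspan := by
        apply Subring.closure_le.mpr
        rintro g (⟨z, hz, rfl⟩ | ⟨n, hn, rfl⟩)
        · exact ⟨{0}, fun _ => ⟨z, hz⟩, by simp, by simp [QAux.Pbasis'_zero]⟩
        · exact ⟨{n}, fun _ => 1, by simp, by simp⟩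
      intro f hf
      exact hle hf
  · intro s c hsum k hk
    have h := QAux.indep s (fun j => (c j : RatFunc ℚ)) hsum k hk
    exact_mod_cast Subtype.ext h
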